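/- arXiv:1808.05349 — 3 statements merged into one kernel-verified Lean document; each statement's English description precedes it below -/
import Mathlib

section
/- With u_i = Q_i(t) as above, for all i ≥ 1 one has u_i * u_{i-2} = (u_{i-1} + 1)(u_{i-1} - 1); consequently, for each n ≥ 1 there exist polynomials v_n, w_n ∈ ℤ[t] with u_n = v_n * w_n, v_n dividing u_{n-1} - 1, and w_n dividing u_{n-1} + 1. -/
set_option synthInstance.maxHeartbeats 1000000


/-- With `u i = Q i` (index shifted by one, so `u (i+1)` is the paper's `u_i`),
`u_i * u_{i-2} = (u_{i-1} + 1) * (u_{i-1} - 1)` for all `i ≥ 1`, and consequently for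
each `n ≥ 1` there exist `v, w ∈ ℤ[t]` with `u_n = v * w`, `v ∣ u_{n-1} - 1` and
`w ∣ u_{n-1} + 1`. -/
theorem u_mul_u_and_factorization (Q : ℕ → Polynomial ℤ)
    (h0 : Q 0 = -1) (h1 : Q 1 = 0)
    (hrec : ∀ n, Q (n + 2) = Polynomial.X * Q (n + 1) - Q n) :
    (∀ i : ℕ, 1 ≤ i → Q (i + 1) * Q (i - 1) = (Q i + 1) * (Q i - 1)) ∧
    (∀ n : ℕ, 1 ≤ n → ∃ v w : Polynomial ℤ,
      Q (n + 1) = v * w ∧ v ∣ Q n - 1 ∧ w ∣ Q n + 1) := by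
  have key : ∀ n : ℕ, Q (n + 2) * Q n = (Q (n + 1) + 1) * (Q (n + 1) - 1) := by
    intro n
    induction n with
    | zero =>
      have h2 : Q 2 = 1 := by rw [hrec 0, h0, h1]; ring
      rw [h0, h1, h2]; ring
    | succ m ih =>
      have hm1 : Q m = Polynomial.X * Q (m + 1) - Q (m + 2) := by
        rw [hrec m]; ring
      rw [hrec (m + 1)]
      rw [hm1] at ih
      linear_combination ih
  have key' : ∀ i : ℕ, 1 ≤ i → Q (i + 1) * Q (i - 1) = (Q i + 1) * (Q i - 1) := by
    intro i hi
    obtain ⟨m, rfl⟩ := Nat.exists_eq_add_of_le hi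
    rw [add_comm 1 m]; simpa using key m
  refine ⟨key', fun n hn => ?_⟩
  have hdvd : Q (n + 1) ∣ (Q n - 1) * (Q n + 1) := by
    refine ⟨Q (n - 1), ?_⟩
    rw [key' n hn]; ring
  obtain ⟨v, w, hv, hw, hvw⟩ := exists_dvd_and_dvd_of_dvd_mul hdvd
  exact ⟨v, w, hvw, hv, hw⟩
end

section
/- Let R be a commutative ring and suppose M, N ∈ SL_2(R) have the same first row. Then N = E * M where E is a lower triangular elementary matrix, i.e., there exists r ∈ R such that N = [[1,0],[r,1]] * M. -/
/-- If `M, N ∈ SL₂(R)` have the same first row, then `N = [[1,0],[r,1]] * M` for some `r`. -/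
theorem eq_elementary_mul_of_same_first_row {R : Type*} [CommRing R]
    (M N : Matrix.SpecialLinearGroup (Fin 2) R)
    (h0 : (M : Matrix (Fin 2) (Fin 2) R) 0 0 = (N : Matrix (Fin 2) (Fin 2) R) 0 0)
    (h1 : (M : Matrix (Fin 2) (Fin 2) R) 0 1 = (N : Matrix (Fin 2) (Fin 2) R) 0 1) :
    ∃ r : R, (N : Matrix (Fin 2) (Fin 2) R) =
      !![(1 : R), 0; r, 1] * (M : Matrix (Fin 2) (Fin 2) R) := by
  set A := (M : Matrix (Fin 2) (Fin 2) R)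
  set B := (N : Matrix (Fin 2) (Fin 2) R)
  have hM : A 0 0 * A 1 1 - A 0 1 * A 1 0 = 1 := by
    have := M.2; rwa [Matrix.det_fin_two] at this
  have hN : B 0 0 * B 1 1 - B 0 1 * B 1 0 = 1 := by
    have := N.2; rwa [Matrix.det_fin_two] at this
  refine ⟨B 1 0 * A 1 1 - B 1 1 * A 1 0, ?_⟩
  ext i j
  rw [Matrix.mul_apply, Fin.sum_univ_two]
  fin_cases i <;> fin_cases j <;>
      simp [Matrix.cons_val_zero, Matrix.cons_val_one]
  · linear_combination -h0
  · linear_combination -h1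
  · linear_combination (-B 1 0)*hM + A 1 0*hN + B 1 1 * A 1 0 * h0 - B 1 0 * A 1 0 * h1
  · linear_combination (-B 1 1)*hM + A 1 1*hN + B 1 1 * A 1 1 * h0 - B 1 0 * A 1 1 * h1
end

section
/- Let K be an imaginary quadratic field with ring of integers R and let p be a nonzero prime element of R with p ≡ 1 (mod 8R). Then for every place v of K lying over 2, the equation -q*x^2 + p*y^2 = 1 has a solution in the completion K_v, for any q ∈ R. -/
open IsDedekindDomain NumberField

section Aux

open Multiplicative

/-- In `ℤₘ₀`, powers of a nonzero element `< 1` are eventually smaller than any unit. -/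
lemma zm0_eventually_pow_lt (c : WithZero (Multiplicative ℤ)) (hc0 : c ≠ 0) (hc1 : c < 1)
    (γ : (WithZero (Multiplicative ℤ))ˣ) :
    ∃ N : ℕ, ∀ n ≥ N, c ^ n < (γ : WithZero (Multiplicative ℤ)) := by
  obtain ⟨d, hd⟩ := WithZero.ne_zero_iff_exists.mp hc0
  obtain ⟨g, hg⟩ := WithZero.ne_zero_iff_exists.mp γ.ne_zero
  have hd1 : Multiplicative.toAdd d ≤ -1 := by
    have h : (d : WithZero (Multiplicative ℤ)) < (1 : Multiplicative ℤ) := by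
      rw [hd]; simpa using hc1
    rw [WithZero.coe_lt_coe] at h
    have h' := Multiplicative.toAdd_lt.mpr h
    simp only [toAdd_one] at h'
    omega
  refine ⟨(Multiplicative.toAdd g).natAbs + 1, fun n hn => ?_⟩
  rw [← hd, ← hg, ← WithZero.coe_pow, WithZero.coe_lt_coe, ← Multiplicative.toAdd_lt,
    toAdd_pow]
  have h1 : (n : ℤ) * Multiplicative.toAdd d ≤ (n : ℤ) * (-1) :=
    mul_le_mul_of_nonneg_left hd1 (by positivity)
  have h2 : -((Multiplicative.toAdd g).natAbs : ℤ) ≤ Multiplicative.toAdd g := by omega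
  have h3 : ((Multiplicative.toAdd g).natAbs + 1 : ℤ) ≤ (n : ℤ) := by exact_mod_cast hn
  calc n • Multiplicative.toAdd d = (n : ℤ) * Multiplicative.toAdd d := by
        rw [nsmul_eq_mul]
    _ < Multiplicative.toAdd g := by nlinarith [h1, h2, h3]
end Aux

/-- Newton/Hensel approximation sequence for a square root of `p ≡ 1 mod 8` in a
commutative ring, with explicit error control. -/
lemma sqrt_seq {R : Type*} [CommRing R] (p c : R) (hc : p - 1 = 8 * c) :
    ∃ u b : ℕ → R, (∀ n, (u n) ^ 2 - p = 2 ^ (n + 3) * b n) ∧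
      (∀ n, u (n + 1) - u n = -(2 ^ (n + 2) * b n * u n)) := by
  let f : ℕ → R × R := fun n => Nat.rec ((1 : R), -c)
    (fun n x => (x.1 - 2 ^ (n + 2) * x.2 * x.1,
      2 ^ n * x.1 ^ 2 * x.2 ^ 2 - 2 ^ (n + 2) * x.2 ^ 2 - 4 * x.2 * c)) n
  have hrec : ∀ n, f (n + 1) = (( f n).1 - 2 ^ (n + 2) * (f n).2 * (f n).1,
      2 ^ n * (f n).1 ^ 2 * (f n).2 ^ 2 - 2 ^ (n + 2) * (f n).2 ^ 2 - 4 * (f n).2 * c) :=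
    fun n => rfl
  refine ⟨fun n => (f n).1, fun n => (f n).2, ?_, ?_⟩
  · intro n
    induction n with
    | zero => show (1 : R) ^ 2 - p = 2 ^ 3 * (-c); linear_combination -hc
    | succ n ih =>
        show (f (n + 1)).1 ^ 2 - p = 2 ^ (n + 1 + 3) * (f (n + 1)).2
        rw [hrec]
        dsimp only
        linear_combination (1 - 2 ^ (n + 3) * (f n).2) * ih - 2 ^ (n + 3) * (f n).2 * hc
  · intro n
    show (f (n + 1)).1 - (f n).1 = -(2 ^ (n + 2) * (f n).2 * (f n).1)
    rw [hrec]
    ring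

set_option maxHeartbeats 1000000 in
set_option synthInstance.maxHeartbeats 200000 in
/-- Let `K` be an imaginary quadratic field with ring of integers `R = 𝓞 K`, and let
`p` be a (nonzero) prime element of `R` with `p ≡ 1 (mod 8R)`. Then for every finite
place `v` of `K` lying over `2`, the equation `-q*x² + p*y² = 1` has a solution in the
completion `K_v`, for any `q ∈ R`. -/
theorem solvable_at_places_over_two
    (K : Type*) [Field K] [NumberField K]
    (hdeg : Module.finrank ℚ K = 2)
    (himag : ∀ w : InfinitePlace K, w.IsComplex)
    (p : 𝓞 K) (hp : Prime p) (hpmod : (8 : 𝓞 K) ∣ p - 1)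
    (v : HeightOneSpectrum (𝓞 K)) (hv : (2 : 𝓞 K) ∈ v.asIdeal)
    (q : 𝓞 K) :
    ∃ x y : v.adicCompletion K,
      -(algebraMap K (v.adicCompletion K) (algebraMap (𝓞 K) K q)) * x ^ 2 +
        (algebraMap K (v.adicCompletion K) (algebraMap (𝓞 K) K p)) * y ^ 2 = 1 := by
  classical
  obtain ⟨c, hc⟩ := hpmod
  obtain ⟨u, b, hub, hstep⟩ := sqrt_seq p c hc
  -- the map from the ring of integers to the completion
  set ι : 𝓞 K → v.adicCompletion K :=
    fun r => algebraMap K (v.adicCompletion K) (algebraMap (𝓞 K) K r) with hι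
  have hι_hom : ∀ r s : 𝓞 K, ι (r * s) = ι r * ι s := by intro r s; simp [hι, map_mul]
  have hι_add : ∀ r s : 𝓞 K, ι (r + s) = ι r + ι s := by intro r s; simp [hι, map_add]
  have hι_sub : ∀ r s : 𝓞 K, ι (r - s) = ι r - ι s := by intro r s; simp [hι, map_sub]
  have hι_pow : ∀ (r : 𝓞 K) (n : ℕ), ι (r ^ n) = (ι r) ^ n := by
    intro r n; simp [hι, map_pow]
  have hι_neg : ∀ r : 𝓞 K, ι (-r) = -(ι r) := by intro r; simp [hι, map_neg]
  have hι_inj : Function.Injective ι := by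
    intro r s hrs
    have h1 : Function.Injective (algebraMap K (v.adicCompletion K)) :=
      (algebraMap K (v.adicCompletion K)).injective
    have h2 : Function.Injective (algebraMap (𝓞 K) K) := IsFractionRing.injective _ _
    exact h2 (h1 hrs)
  -- valuation facts
  have hval : ∀ r : 𝓞 K, Valued.v (ι r) = v.valuation K (algebraMap (𝓞 K) K r) := by
    intro r
    exact IsDedekindDomain.HeightOneSpectrum.valuedAdicCompletion_eq_valuation' v
      (algebraMap (𝓞 K) K r)
  have hle1 : ∀ r : 𝓞 K, Valued.v (ι r) ≤ 1 := by
    intro r; rw [hval]; exact v.valuation_le_one (K := K) r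
  set c0 : WithZero (Multiplicative ℤ) := Valued.v (ι 2) with hc0def
  have hc0lt1 : c0 < 1 := by
    rw [hc0def, hval]
    exact (v.valuation_lt_one_iff_dvd (K := K) 2).mpr (Ideal.dvd_span_singleton.mpr hv)
  have hι2ne : ι (2 : 𝓞 K) ≠ 0 := by
    intro h
    have : (2 : 𝓞 K) = 0 := hι_inj (by rw [h]; simp [hι])
    exact two_ne_zero this
  have hc0ne : c0 ≠ 0 := (Valuation.ne_zero_iff _).mpr hι2ne
  -- the approximating sequence in the completion
  set s : ℕ → v.adicCompletion K := fun n => ι (u n) with hs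
  have happ : ∀ n, (s n) ^ 2 - ι p = (ι 2) ^ (n + 3) * ι (b n) := by
    intro n
    rw [hs]
    rw [← hι_pow, ← hι_sub, hub n, hι_hom, hι_pow]
  have hvpow : ∀ (r : 𝓞 K) (k : ℕ), Valued.v ((ι 2) ^ k * ι r) ≤ c0 ^ k := by
    intro r k
    rw [Valuation.map_mul, Valuation.map_pow]
    calc c0 ^ k * Valued.v (ι r) ≤ c0 ^ k * 1 := mul_le_mul_right (hle1 r) _
      _ = c0 ^ k := mul_one _
  have hdiff : ∀ n, Valued.v (s (n + 1) - s n) ≤ c0 ^ (n + 2) := by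
    intro n
    have : s (n + 1) - s n = -((ι 2) ^ (n + 2) * (ι (b n) * ι (u n))) := by
      rw [hs, ← hι_sub, hstep n, hι_neg, hι_hom, hι_hom, hι_pow, mul_assoc]
    rw [this, Valuation.map_neg]
    calc Valued.v ((ι 2) ^ (n + 2) * (ι (b n) * ι (u n)))
        = Valued.v ((ι 2) ^ (n + 2) * ι (b n * u n)) := by rw [hι_hom]
      _ ≤ c0 ^ (n + 2) := hvpow _ _
  have hc0le1 : c0 ≤ 1 := le_of_lt hc0lt1
  -- gap bound
  have hgap : ∀ m n, m ≤ n → Valued.v (s n - s m) ≤ c0 ^ (m + 2) := by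
    intro m n hmn
    induction n, hmn using Nat.le_induction with
    | base => simp
    | succ n hmn ih =>
        have h1 : Valued.v (s (n + 1) - s m) ≤
            max (Valued.v (s (n + 1) - s n)) (Valued.v (s n - s m)) := by
          have : s (n + 1) - s m = (s (n + 1) - s n) + (s n - s m) := by ring
          rw [this]; exact Valuation.map_add _ _ _
        refine le_trans h1 (max_le (le_trans (hdiff n) ?_) ih)
        exact pow_le_pow_right_of_le_one' hc0le1 (by omega)
  -- Cauchy
  have hcauchy : CauchySeq s := by
    rw [(Valued.hasBasis_uniformity (v.adicCompletion K)
      (WithZero (Multiplicative ℤ))).cauchySeq_iff]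
    intro γ _
    obtain ⟨N, hN⟩ := zm0_eventually_pow_lt c0 hc0ne hc0lt1
      (Units.map (MonoidWithZeroHom.ValueGroup₀.embedding (f := MonoidWithZeroHom.ofClass
        (Valued.v : Valuation (v.adicCompletion K) (WithZero (Multiplicative ℤ))))).toMonoidHom γ)
    refine ⟨N, fun m hm n hn => ?_⟩
    show Valued.v.restrict (s n - s m) < γ.1
    rw [Valuation.restrict_lt_iff_lt_embedding]
    rcases le_total m n with h | h
    · exact lt_of_le_of_lt (hgap m n h) (hN _ (by omega))
    · rw [Valuation.map_sub_swap]
      exact lt_of_le_of_lt (hgap n m h) (hN _ (by omega))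
  obtain ⟨y0, hy0⟩ := cauchySeq_tendsto_of_complete hcauchy
  -- limit of squares
  have ht1 : Filter.Tendsto (fun n => (s n) ^ 2) Filter.atTop (nhds (y0 ^ 2)) := hy0.pow 2
  have htzero : Filter.Tendsto (fun n => (ι 2) ^ (n + 3) * ι (b n)) Filter.atTop (nhds 0) := by
    rw [(Valued.hasBasis_nhds_zero (v.adicCompletion K)
      (WithZero (Multiplicative ℤ))).tendsto_right_iff]
    intro γ _
    obtain ⟨N, hN⟩ := zm0_eventually_pow_lt c0 hc0ne hc0lt1
      (Units.map (MonoidWithZeroHom.ValueGroup₀.embedding (f := MonoidWithZeroHom.ofClass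
        (Valued.v : Valuation (v.adicCompletion K) (WithZero (Multiplicative ℤ))))).toMonoidHom γ)
    filter_upwards [Filter.eventually_ge_atTop N] with n hn
    exact (Valuation.restrict_lt_iff_lt_embedding _).mpr
      (lt_of_le_of_lt (hvpow (b n) (n + 3)) (hN _ (by omega)))
  have ht2 : Filter.Tendsto (fun n => (s n) ^ 2) Filter.atTop (nhds (ι p)) := by
    have heq : (fun n => (s n) ^ 2) = fun n => ι p + (ι 2) ^ (n + 3) * ι (b n) := by
      funext n
      linear_combination happ n
    rw [heq]
    have hconst : Filter.Tendsto (fun _ : ℕ => ι p) Filter.atTop (nhds (ι p)) :=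
      tendsto_const_nhds
    simpa only [add_zero] using hconst.add htzero
  have hy0sq : y0 ^ 2 = ι p := tendsto_nhds_unique ht1 ht2
  have hιpne : ι p ≠ 0 := by
    intro h
    exact hp.ne_zero (hι_inj (by rw [h]; simp [hι]))
  have hy0ne : y0 ≠ 0 := by
    intro h
    rw [h] at hy0sq
    exact hιpne (by simpa using hy0sq.symm)
  refine ⟨0, y0⁻¹, ?_⟩
  have hgoal : (algebraMap K (v.adicCompletion K)) ((algebraMap (𝓞 K) K) p) = y0 ^ 2 :=
    hy0sq.symm
  rw [hgoal]
  field_simp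
  simp
end
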